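/- Fix n ≥ 2 and ε > 0, and let c_1,…,c_n ∈ ℝ^n be given by c_1 = e_1 and c_j = ε·e_1 + e_j for 2 ≤ j ≤ n, where e_1,…,e_n is the standard basis. For S ⊆ {1,…,n}, let proj_S denote orthogonal projection onto span{c_i : i ∈ S} and define F(S) = ∑_{j=1}^n ‖c_j − proj_S(c_j)‖². Then: (i) F(∅) − F({1}) = 1 + ε²(n−1); and (ii) F({2,…,n}) − F({1,…,n}) ≤ min{1, 1/(ε²(n−1))}. (Since the c_j span ℝ^n, F({1,…,n}) = 0.) -/

import Mathlib

open Finset RealInnerProductSpace in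
private lemma proj_dist_le' {E : Type*} [NormedAddCommGroup E] [InnerProductSpace ℝ E]
    (K : Submodule ℝ E) [K.HasOrthogonalProjection] (y x : E) (hx : x ∈ K) :
    ‖y - (K.orthogonalProjectionOnto y : E)‖ ≤ ‖y - x‖ := by
  rw [Submodule.coe_orthogonalProjectionOnto_apply, Submodule.starProjection_minimal]
  refine ciInf_le ⟨0, ?_⟩ (⟨x, hx⟩ : K)
  rintro a ⟨z, rfl⟩
  exact norm_nonneg _

/-- Tightness example for the curvature/condition-number bound: for the columns
`c_1 = e_1`, `c_j = ε·e_1 + e_j` (`j ≥ 2`) in `ℝⁿ`, the column-subset objective `F`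
satisfies `F(∅) - F({1}) = 1 + ε²(n-1)`,
`F({2,…,n}) - F({1,…,n}) ≤ min{1, 1/(ε²(n-1))}`, and `F({1,…,n}) = 0`. -/
theorem stmt_19 {n : ℕ} (hn : 2 ≤ n) (ε : ℝ) (hε : 0 < ε)
    (i0 : Fin n) (hi0 : (i0 : ℕ) = 0)
    (c : Fin n → EuclideanSpace ℝ (Fin n))
    (hc1 : c i0 = EuclideanSpace.single i0 1)
    (hcj : ∀ j : Fin n, j ≠ i0 →
      c j = ε • EuclideanSpace.single i0 1 + EuclideanSpace.single j 1)
    (F : Finset (Fin n) → ℝ)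
    (hF : ∀ S : Finset (Fin n), F S = ∑ j : Fin n,
      ‖c j - ((Submodule.span ℝ (c '' ↑S)).orthogonalProjectionOnto (c j) : EuclideanSpace ℝ (Fin n))‖ ^ 2) :
    F ∅ - F {i0} = 1 + ε ^ 2 * ((n : ℝ) - 1) ∧
    F (Finset.univ.erase i0) - F Finset.univ ≤ min 1 (1 / (ε ^ 2 * ((n : ℝ) - 1))) ∧
    F Finset.univ = 0 := by
  classical
  set e : Fin n → EuclideanSpace ℝ (Fin n) := fun i => EuclideanSpace.single i 1 with he
  have he' : ∀ i : Fin n, EuclideanSpace.single i 1 = e i := fun i => rfl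
  have hNnat : (1 : ℕ) ≤ n := le_trans (by norm_num) hn
  have hNcast : ((n - 1 : ℕ) : ℝ) = (n : ℝ) - 1 := by
    push_cast [Nat.cast_sub hNnat]; ring
  have hN2 : (2 : ℝ) ≤ (n : ℝ) := by exact_mod_cast hn
  have hNpos : (0 : ℝ) < (n : ℝ) - 1 := by linarith
  -- inner products of basis vectors
  have hinner : ∀ i j : Fin n, @inner ℝ _ _ (e i) (e j) = if i = j then 1 else 0 := by
    intro i j
    rw [he]
    simp only [EuclideanSpace.inner_single_left, EuclideanSpace.single_apply]
    simp [eq_comm]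
  have henorm : ∀ i : Fin n, ‖e i‖ = 1 := by
    intro i; rw [he]; simp [EuclideanSpace.norm_single]
  -- norms of columns
  have hcnorm : ∀ j : Fin n, j ≠ i0 → ‖c j‖ ^ 2 = ε ^ 2 + 1 := by
    intro j hj
    rw [hcj j hj, he' i0, he' j, norm_add_sq_real, real_inner_smul_left, hinner]
    rw [if_neg (fun h => hj h.symm)]
    simp [norm_smul, henorm, abs_of_pos hε]
  -- value of F ∅
  have hFempty : F ∅ = 1 + ((n : ℝ) - 1) * (ε ^ 2 + 1) := by
    rw [hF]
    have hbot : Submodule.span ℝ (c '' (↑(∅ : Finset (Fin n)))) = ⊥ := by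
      simp
    have hterm : ∀ j : Fin n,
        ‖c j - (Submodule.orthogonalProjectionOnto (Submodule.span ℝ (c '' (↑(∅ : Finset (Fin n))))) (c j) :
          EuclideanSpace ℝ (Fin n))‖ ^ 2 = ‖c j‖ ^ 2 := by
      intro j
      rw [Submodule.coe_orthogonalProjectionOnto_apply, Submodule.eq_starProjection_of_mem_of_inner_eq_zero (Submodule.zero_mem _) (fun w hw => by rw [hbot, Submodule.mem_bot] at hw; simp [hw])]
      simp
    rw [Finset.sum_congr rfl fun j _ => hterm j]
    rw [← Finset.add_sum_erase _ _ (Finset.mem_univ i0), hc1, he' i0, henorm]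
    rw [Finset.sum_congr rfl fun j hj => hcnorm j (Finset.ne_of_mem_erase hj)]
    rw [Finset.sum_const, Finset.card_erase_of_mem (Finset.mem_univ i0), Finset.card_univ,
      Fintype.card_fin, nsmul_eq_mul, hNcast]
    ring
  -- value of F {i0}
  have hKsingle : Submodule.span ℝ (c '' (↑({i0} : Finset (Fin n)))) = Submodule.span ℝ {e i0} := by
    simp [hc1, he]
  have hFsingle : F {i0} = (n : ℝ) - 1 := by
    rw [hF]
    have hterm : ∀ j : Fin n,
        ‖c j - (Submodule.orthogonalProjectionOnto (Submodule.span ℝ (c '' (↑({i0} : Finset (Fin n))))) (c j) :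
          EuclideanSpace ℝ (Fin n))‖ ^ 2 = if j = i0 then 0 else 1 := by
      intro j
      by_cases hj : j = i0
      · rw [if_pos hj, hj]
        have hmem : c i0 ∈ Submodule.span ℝ (c '' (↑({i0} : Finset (Fin n)))) :=
          Submodule.subset_span (Set.mem_image_of_mem c (by simp))
        rw [Submodule.coe_orthogonalProjectionOnto_apply, Submodule.starProjection_eq_self_iff.mpr hmem]
        simp
      · rw [if_neg hj]
        have hproj : (Submodule.orthogonalProjectionOnto (Submodule.span ℝ (c '' (↑({i0} : Finset (Fin n)))))
            (c j) : EuclideanSpace ℝ (Fin n)) = ε • e i0 := by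
          rw [Submodule.coe_orthogonalProjectionOnto_apply]
          apply Submodule.eq_starProjection_of_mem_of_inner_eq_zero
          · rw [hKsingle]
            exact Submodule.smul_mem _ _ (Submodule.mem_span_singleton_self _)
          · intro v hv
            rw [hKsingle, Submodule.mem_span_singleton] at hv
            obtain ⟨a, rfl⟩ := hv
            rw [hcj j hj, he' i0, he' j]
            have hx : ε • e i0 + e j - ε • e i0 = e j := by abel
            rw [hx, real_inner_smul_right, hinner, if_neg hj]
            ring
        rw [hproj, hcj j hj, he' i0, he' j]
        have hx : ε • e i0 + e j - ε • e i0 = e j := by abel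
        rw [hx, henorm]
        norm_num
    rw [Finset.sum_congr rfl fun j _ => hterm j]
    rw [← Finset.add_sum_erase _ _ (Finset.mem_univ i0), if_pos rfl, zero_add]
    rw [Finset.sum_congr rfl fun j hj => if_neg (Finset.ne_of_mem_erase hj)]
    rw [Finset.sum_const, Finset.card_erase_of_mem (Finset.mem_univ i0), Finset.card_univ,
      Fintype.card_fin, nsmul_eq_mul, hNcast, mul_one]
  -- F univ = 0
  have hFuniv : F Finset.univ = 0 := by
    rw [hF]
    apply Finset.sum_eq_zero
    intro j _
    have hmem : c j ∈ Submodule.span ℝ (c '' (↑(Finset.univ : Finset (Fin n)))) :=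
      Submodule.subset_span (Set.mem_image_of_mem c (by simp))
    rw [Submodule.coe_orthogonalProjectionOnto_apply, Submodule.starProjection_eq_self_iff.mpr hmem]
    simp
  -- F (univ.erase i0)
  set K' := Submodule.span ℝ (c '' (↑(Finset.univ.erase i0))) with hK'
  have hFer : F (Finset.univ.erase i0) =
      ‖c i0 - (Submodule.orthogonalProjectionOnto K' (c i0) : EuclideanSpace ℝ (Fin n))‖ ^ 2 := by
    rw [hF]
    rw [← Finset.add_sum_erase _ _ (Finset.mem_univ i0)]
    have hz : ∀ j ∈ Finset.univ.erase i0,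
        ‖c j - (Submodule.orthogonalProjectionOnto K' (c j) : EuclideanSpace ℝ (Fin n))‖ ^ 2 = 0 := by
      intro j hj
      have hmem : c j ∈ K' := Submodule.subset_span (Set.mem_image_of_mem c (by simpa using hj))
      rw [Submodule.coe_orthogonalProjectionOnto_apply, Submodule.starProjection_eq_self_iff.mpr hmem]
      simp
    rw [Finset.sum_eq_zero hz, add_zero]
  have hproj_le : ∀ x ∈ K',
      ‖c i0 - (Submodule.orthogonalProjectionOnto K' (c i0) : EuclideanSpace ℝ (Fin n))‖ ≤ ‖c i0 - x‖ :=
    fun x hx => proj_dist_le' K' (c i0) x hx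
  -- bound 1
  have hb1 : ‖c i0 - (Submodule.orthogonalProjectionOnto K' (c i0) : EuclideanSpace ℝ (Fin n))‖ ≤ 1 := by
    have h0 := hproj_le 0 (zero_mem K')
    simpa [hc1, he' i0, henorm] using h0
  -- bound 2
  have hNε : ((n : ℝ) - 1) * ε ≠ 0 := ne_of_gt (mul_pos hNpos hε)
  set w : EuclideanSpace ℝ (Fin n) := ∑ j ∈ Finset.univ.erase i0, e j with hw
  have hsum : ∑ j ∈ Finset.univ.erase i0, c j = (((n : ℝ) - 1) * ε) • e i0 + w := by
    rw [Finset.sum_congr rfl fun j hj => by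
      rw [hcj j (Finset.ne_of_mem_erase hj), he' i0, he' j]]
    rw [Finset.sum_add_distrib, Finset.sum_const, Finset.card_erase_of_mem (Finset.mem_univ i0),
      Finset.card_univ, Fintype.card_fin]
    congr 1
    rw [← Nat.cast_smul_eq_nsmul ℝ, hNcast, smul_smul]
  set x2 : EuclideanSpace ℝ (Fin n) :=
    (((n : ℝ) - 1) * ε)⁻¹ • ∑ j ∈ Finset.univ.erase i0, c j with hx2def
  have hx2mem : x2 ∈ K' :=
    Submodule.smul_mem _ _ (Submodule.sum_mem _ fun j hj =>
      Submodule.subset_span (Set.mem_image_of_mem c (by simpa using hj)))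
  have hx2 : c i0 - x2 = -((((n : ℝ) - 1) * ε)⁻¹ • w) := by
    rw [hx2def, hsum, smul_add, smul_smul, inv_mul_cancel₀ hNε, one_smul, hc1, he' i0]
    abel
  have hw2 : ‖w‖ ^ 2 = (n : ℝ) - 1 := by
    rw [← real_inner_self_eq_norm_sq, hw, sum_inner]
    have hone : ∀ j ∈ Finset.univ.erase i0,
        (inner ℝ (e j) (∑ k ∈ Finset.univ.erase i0, e k) : ℝ) = 1 := by
      intro j hj
      rw [inner_sum, Finset.sum_congr rfl fun k _ => hinner j k, Finset.sum_ite_eq]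
      exact if_pos hj
    rw [Finset.sum_congr rfl hone, Finset.sum_const,
      Finset.card_erase_of_mem (Finset.mem_univ i0), Finset.card_univ, Fintype.card_fin,
      nsmul_eq_mul, hNcast, mul_one]
  have hb2 : ‖c i0 - (Submodule.orthogonalProjectionOnto K' (c i0) : EuclideanSpace ℝ (Fin n))‖ ^ 2 ≤
      1 / (ε ^ 2 * ((n : ℝ) - 1)) := by
    have hle := hproj_le x2 hx2mem
    have h2 : ‖c i0 - x2‖ ^ 2 = 1 / (ε ^ 2 * ((n : ℝ) - 1)) := by
      rw [hx2, norm_neg, norm_smul, mul_pow, hw2, Real.norm_eq_abs, sq_abs]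
      field_simp
    calc ‖c i0 - (Submodule.orthogonalProjectionOnto K' (c i0) : EuclideanSpace ℝ (Fin n))‖ ^ 2
        ≤ ‖c i0 - x2‖ ^ 2 := pow_le_pow_left₀ (norm_nonneg _) hle 2
      _ = 1 / (ε ^ 2 * ((n : ℝ) - 1)) := h2
  refine ⟨?_, ?_, hFuniv⟩
  · rw [hFempty, hFsingle]; ring
  · rw [hFer, hFuniv, sub_zero]
    refine le_min ?_ hb2
    calc ‖c i0 - (Submodule.orthogonalProjectionOnto K' (c i0) : EuclideanSpace ℝ (Fin n))‖ ^ 2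
        ≤ 1 ^ 2 := pow_le_pow_left₀ (norm_nonneg _) hb1 2
      _ = 1 := one_pow 2
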